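/- Equivalence of the canonical exchange relation and additivity of canonical angles: let i, j, k, ℓ be four distinct labels and for each ordered pair (a,b) of distinct labels let x_{ab} ∈ R be a unit with central σ-fixed norm such that σ(x_{ab}) = x_{ba}. Define the canonical angles Δ_k^{ab} = τ(x_{ak})·x_{ab}·τ(x_{kb}). Then the canonical exchange relation N(x_{ik})·x_{ℓj} = x_{ℓk}·τ(x_{ik})·x_{ij} + x_{ℓi}·τ(x_{ki})·x_{kj} holds if and only if the angle-additivity relation N(x_{ki})·Δ_k^{jℓ} = N(x_{kℓ})·Δ_k^{ji} + N(x_{kj})·Δ_k^{iℓ} holds. -/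

import Mathlib

/-- The norm `N(x) = x · τ(x)`. -/
def Nrm {R : Type*} [Ring R] (τ : R → R) (x : R) : R := x * τ x

/-- `x` has central `σ`-fixed norm. -/
def CentralFixedNorm {R : Type*} [Ring R] (σ τ : R → R) (x : R) : Prop :=
  (∀ y, Nrm τ x * y = y * Nrm τ x) ∧ σ (Nrm τ x) = Nrm τ x

/-- Equivalence of the canonical exchange relation and additivity of canonical
angles: for four distinct labels `i, j, k, l` and units `x a b` (for distinct
labels `a, b`) with central `σ`-fixed norm and `σ(x a b) = x b a`, setting
`Δ_k^{ab} = τ(x a k) · x a b · τ(x k b)`, the canonical exchange relation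
`N(x i k) · x l j = x l k · τ(x i k) · x i j + x l i · τ(x k i) · x k j` holds
iff `N(x k i) · Δ_k^{jl} = N(x k l) · Δ_k^{ji} + N(x k j) · Δ_k^{il}` holds. -/
theorem exchange_iff_angle_additivity {R : Type*} [Ring R] (σ τ : R → R)
    (hσadd : ∀ x y, σ (x + y) = σ x + σ y)
    (hσmul : ∀ x y, σ (x * y) = σ y * σ x)
    (hσone : σ 1 = 1)
    (hσσ : ∀ x, σ (σ x) = x)
    (hτadd : ∀ x y, τ (x + y) = τ x + τ y)
    (hτmul : ∀ x y, τ (x * y) = τ y * τ x)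
    (hτone : τ 1 = 1)
    (hττ : ∀ x, τ (τ x) = x)
    (hστ : ∀ x, σ (τ x) = τ (σ x))
    {ι : Type*} (i j k l : ι)
    (hij : i ≠ j) (hik : i ≠ k) (hil : i ≠ l)
    (hjk : j ≠ k) (hjl : j ≠ l) (hkl : k ≠ l)
    (x : ι → ι → R)
    (hunit : ∀ a b, a ≠ b → IsUnit (x a b))
    (hnorm : ∀ a b, a ≠ b → CentralFixedNorm σ τ (x a b))
    (hswap : ∀ a b, a ≠ b → σ (x a b) = x b a) :
    (Nrm τ (x i k) * x l j
        = x l k * τ (x i k) * x i j + x l i * τ (x k i) * x k j) ↔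
    (Nrm τ (x k i) * (τ (x j k) * x j l * τ (x k l))
        = Nrm τ (x k l) * (τ (x j k) * x j i * τ (x k i))
          + Nrm τ (x k j) * (τ (x i k) * x i l * τ (x k l))) := by
  -- σ is injective
  have hσinj : ∀ u v : R, σ u = σ v → u = v := fun u v h => by
    rw [← hσσ u, h, hσσ]
  -- τ of a unit is a unit
  have hτunit : ∀ a b, a ≠ b → IsUnit (τ (x a b)) := by
    intro a b hab
    obtain ⟨u, hu⟩ := hunit a b hab
    refine isUnit_iff_exists.mpr ⟨τ ↑u⁻¹, ?_, ?_⟩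
    · rw [← hu, ← hτmul, Units.inv_mul, hτone]
    · rw [← hu, ← hτmul, Units.mul_inv, hτone]
  -- τ(x) * x = N(x)
  have htx : ∀ a b, a ≠ b → τ (x a b) * x a b = Nrm τ (x a b) := by
    intro a b hab
    refine (hunit a b hab).mul_left_cancel ?_
    rw [← mul_assoc]
    exact (hnorm a b hab).1 (x a b)
  -- N(x a b) = N(x b a)
  have hNswap : ∀ a b, a ≠ b → Nrm τ (x a b) = Nrm τ (x b a) := by
    intro a b hab
    have h1 : σ (Nrm τ (x a b)) = Nrm τ (x b a) := by
      rw [show Nrm τ (x a b) = x a b * τ (x a b) from rfl, hσmul, hστ, hswap a b hab,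
        htx b a (Ne.symm hab)]
    rw [← (hnorm a b hab).2, h1]
  have hL : τ (x j k) * σ (Nrm τ (x i k) * x l j) * τ (x k l)
      = Nrm τ (x k i) * (τ (x j k) * x j l * τ (x k l)) := by
    rw [hσmul, hswap l j (Ne.symm hjl), (hnorm i k hik).2, ← hNswap i k hik]
    simp only [mul_assoc]
    simp only [(hnorm i k hik).1, mul_assoc]
  have hR : τ (x j k) * σ (x l k * τ (x i k) * x i j + x l i * τ (x k i) * x k j) * τ (x k l)
      = Nrm τ (x k l) * (τ (x j k) * x j i * τ (x k i))
        + Nrm τ (x k j) * (τ (x i k) * x i l * τ (x k l)) := by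
    rw [hσadd, mul_add, add_mul]
    congr 1
    · rw [hσmul, hσmul, hστ, hswap i j hij, hswap i k hik, hswap l k (Ne.symm hkl)]
      simp only [mul_assoc]
      rw [show x k l * τ (x k l) = Nrm τ (x k l) from rfl]
      simp only [(hnorm k l hkl).1, mul_assoc]
    · rw [hσmul, hσmul, hστ, hswap k j (Ne.symm hjk), hswap k i (Ne.symm hik),
        hswap l i (Ne.symm hil)]
      simp only [← mul_assoc]
      rw [htx j k hjk, hNswap j k hjk]
  constructor
  · intro h
    have h2 := congrArg (fun y => τ (x j k) * σ y * τ (x k l)) h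
    rw [hL, hR] at h2
    exact h2
  · intro h
    rw [← hL, ← hR] at h
    have h4 := (hτunit k l hkl).mul_right_cancel h
    have h5 := (hτunit j k hjk).mul_left_cancel h4
    exact hσinj _ _ h5
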